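/- Let Q be a smooth manifold and γ = (γ^1,…,γ^k) a section of the k-cotangent bundle projection π_Q : T_k*Q → Q, where each γ^κ is a one-form on Q. Then for each κ one has γ*Ω^κ = −dγ^κ, where Ω^κ = (π^κ)*Ω_Q. Consequently, γ*Ω^κ = 0 for all κ if and only if every γ^κ is closed; i.e. the image of the section γ is a Lagrangian submanifold of the k-symplectic manifold (T_k*Q, [Ω^κ], V) if and only if γ is a closed section. -/

import Mathlib

noncomputable section

open scoped BigOperators

variable {E F : Type*} [NormedAddCommGroup E] [NormedSpace ℝ E]
  [NormedAddCommGroup F] [NormedSpace ℝ F]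

/-- The exterior derivative of a smooth function, as a one-form. -/
def extDer0 (f : E → ℝ) : E → E → ℝ := fun x v => fderiv ℝ f x v

/-- The exterior derivative of a one-form. -/
def extDer1 (α : E → E → ℝ) : E → E → E → ℝ := fun x u v =>
  fderiv ℝ (fun y => α y v) x u - fderiv ℝ (fun y => α y u) x v

/-- The exterior derivative of a two-form. -/
def extDer2 (ω : E → E → E → ℝ) : E → E → E → E → ℝ := fun x u v w =>
  fderiv ℝ (fun y => ω y v w) x u - fderiv ℝ (fun y => ω y u w) x v +
    fderiv ℝ (fun y => ω y u v) x w

/-- Wedge product of two one-forms. -/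
def wedge11 (α β : E → E → ℝ) : E → E → E → ℝ := fun x u v =>
  α x u * β x v - α x v * β x u

/-- Wedge product of a one-form with a two-form. -/
def wedge12 (θ : E → E → ℝ) (ω : E → E → E → ℝ) : E → E → E → E → ℝ := fun x u v w =>
  θ x u * ω x v w - θ x v * ω x u w + θ x w * ω x u v

/-- Pullback of a one-form along a smooth map. -/
def pb1 (φ : E → F) (α : F → F → ℝ) : E → E → ℝ := fun x v => α (φ x) (fderiv ℝ φ x v)

/-- Pullback of a two-form along a smooth map. -/
def pb2 (φ : E → F) (ω : F → F → F → ℝ) : E → E → E → ℝ := fun x u v =>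
  ω (φ x) (fderiv ℝ φ x u) (fderiv ℝ φ x v)

/-- Model for the cotangent bundle `T*Q` of the manifold `Q = E`. -/
abbrev Cot (E : Type*) [NormedAddCommGroup E] [NormedSpace ℝ E] := E × (E →L[ℝ] ℝ)

/-- The tautological (canonical) one-form `Θ_Q` on `T*Q`. -/
def taut : Cot E → Cot E → ℝ := fun z v => z.2 v.1

/-- The canonical symplectic two-form `Ω_Q = -dΘ_Q` on `T*Q`. -/
def canSymp : Cot E → Cot E → Cot E → ℝ := fun z u v => -(extDer1 taut z u v)
/-- Model for the `k`-cotangent bundle `T_k*Q = T*Q ⊕_Q ⋯ ⊕_Q T*Q` of `Q = E`. -/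
abbrev kCot (E : Type*) [NormedAddCommGroup E] [NormedSpace ℝ E] (k : ℕ) :=
  E × (Fin k → E →L[ℝ] ℝ)

/-- The projection `π^κ : T_k*Q → T*Q` onto the `κ`-th summand. -/
def kproj {k : ℕ} (κ : Fin k) : kCot E k → Cot E := fun z => (z.1, z.2 κ)

/-- The canonical two-forms `Ω^κ = (π^κ)*Ω_Q` on `T_k*Q`
(`π^κ` is linear, so its pullback is plain composition). -/
def kForm {k : ℕ} (κ : Fin k) : kCot E k → kCot E k → kCot E k → ℝ :=
  fun z u v => canSymp (kproj κ z) (kproj κ u) (kproj κ v)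
/-- The `k`-symplectic orthogonal of a set `S` of tangent vectors at `z`, with respect
to a family of two-forms `Ω^κ`. -/
def kPerp {k : ℕ} (Ω : Fin k → kCot E k → kCot E k → kCot E k → ℝ) (z : kCot E k)
    (S : Set (kCot E k)) : Set (kCot E k) :=
  {v | ∀ w ∈ S, ∀ κ, Ω κ z v w = 0}

section Aux

variable {E : Type*} [NormedAddCommGroup E] [NormedSpace ℝ E]

/-- Evaluation `y ↦ y.2 w` on `Cot E` as a continuous linear map. -/
def evCot (w : E) : Cot E →L[ℝ] ℝ :=
  (ContinuousLinearMap.apply ℝ ℝ w).comp (ContinuousLinearMap.snd ℝ E (E →L[ℝ] ℝ))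

lemma extDer1_taut (z a b : Cot E) :
    extDer1 (taut (E := E)) z a b = a.2 b.1 - b.2 a.1 := by
  have h1 : (fun y : Cot E => taut y b) = ⇑(evCot (E := E) b.1) := rfl
  have h2 : (fun y : Cot E => taut y a) = ⇑(evCot (E := E) a.1) := rfl
  simp only [extDer1, h1, h2, ContinuousLinearMap.fderiv]
  rfl

lemma kForm_eq {k : ℕ} (κ : Fin k) (z a b : kCot E k) :
    kForm κ z a b = b.2 κ a.1 - a.2 κ b.1 := by
  simp [kForm, canSymp, extDer1_taut, kproj]

lemma fderiv_eval_apply {k : ℕ} (γ : E → Fin k → E →L[ℝ] ℝ)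
    (hγ : Differentiable ℝ γ) (κ : Fin k) (w : E) (q u : E) :
    fderiv ℝ (fun y => γ y κ w) q u = fderiv ℝ γ q u κ w := by
  have hcomp : (fun y => γ y κ w) =
      ⇑((ContinuousLinearMap.apply ℝ ℝ w).comp
        (ContinuousLinearMap.proj (R := ℝ) (φ := fun _ : Fin k => E →L[ℝ] ℝ) κ)) ∘ γ := rfl
  rw [hcomp, fderiv_comp q (ContinuousLinearMap.differentiableAt _) (hγ q),
    ContinuousLinearMap.fderiv]
  rfl

lemma fderiv_section {k : ℕ} (γ : E → Fin k → E →L[ℝ] ℝ)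
    (hγ : Differentiable ℝ γ) (q u : E) :
    fderiv ℝ (fun q => ((q, γ q) : kCot E k)) q u = (u, fderiv ℝ γ q u) := by
  rw [DifferentiableAt.fderiv_prodMk differentiableAt_fun_id (hγ q)]
  simp [fderiv_id']

end Aux

/-- For a section `γ = (γ^1,…,γ^k)` of `π_Q : T_k*Q → Q` (realized as
`Γ q = (q, γ q)`) one has `γ*Ω^κ = -dγ^κ`; consequently `γ*Ω^κ = 0` for all `κ` iff
every `γ^κ` is closed, i.e. the image of `γ` is a Lagrangian submanifold of the
`k`-symplectic manifold `(T_k*Q, [Ω^κ], V)` iff `γ` is a closed section. -/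
theorem section_pullback_k_symplectic
    [FiniteDimensional ℝ E] {k : ℕ}
    (γ : E → Fin k → E →L[ℝ] ℝ) (hγs : ContDiff ℝ (⊤ : ℕ∞) γ)
    (Γ : E → kCot E k) (hΓ : ∀ q, Γ q = (q, γ q)) :
    (∀ (κ : Fin k) q u v,
      pb2 Γ (kForm κ) q u v = -(extDer1 (fun y w => γ y κ w) q u v)) ∧
    ((∀ (κ : Fin k) q u v, pb2 Γ (kForm κ) q u v = 0) ↔
      (∀ (κ : Fin k) q u v, extDer1 (fun y w => γ y κ w) q u v = 0)) ∧
    ((∀ q, kPerp (fun κ : Fin k => kForm κ) (Γ q) (Set.range (fderiv ℝ Γ q)) =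
        Set.range (fderiv ℝ Γ q)) ↔
      (∀ (κ : Fin k) q u v, extDer1 (fun y w => γ y κ w) q u v = 0)) := by
  have hΓeq : Γ = fun q => ((q, γ q) : kCot E k) := funext hΓ
  subst hΓeq
  have hγd : Differentiable ℝ γ := hγs.differentiable (by simp)
  -- differential of the section
  have hDΓ : ∀ q u, fderiv ℝ (fun q => ((q, γ q) : kCot E k)) q u
      = (u, fderiv ℝ γ q u) := fderiv_section γ hγd
  -- the pullback computed
  have hP : ∀ (κ : Fin k) q u v, pb2 (fun q => ((q, γ q) : kCot E k)) (kForm κ) q u v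
      = fderiv ℝ γ q v κ u - fderiv ℝ γ q u κ v := by
    intro κ q u v
    simp [pb2, kForm_eq, hDΓ]
  -- the exterior derivative computed
  have hE : ∀ (κ : Fin k) q u v, extDer1 (fun y w => γ y κ w) q u v
      = fderiv ℝ γ q u κ v - fderiv ℝ γ q v κ u := by
    intro κ q u v
    simp [extDer1, fderiv_eval_apply γ hγd]
  have h1 : ∀ (κ : Fin k) q u v,
      pb2 (fun q => ((q, γ q) : kCot E k)) (kForm κ) q u v
        = -(extDer1 (fun y w => γ y κ w) q u v) := by
    intro κ q u v; rw [hP, hE]; ring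
  refine ⟨h1, ?_, ?_⟩
  · constructor
    · intro h κ q u v
      have := h κ q u v
      rw [h1] at this
      linarith
    · intro h κ q u v
      rw [h1, h]; ring
  · constructor
    · intro h κ q u v
      have hmem : (u, fderiv ℝ γ q u) ∈
          Set.range (fderiv ℝ (fun q => ((q, γ q) : kCot E k)) q) :=
        ⟨u, (hDΓ q u).symm ▸ rfl⟩
      have hperp := (h q).symm ▸ hmem
      have := hperp (v, fderiv ℝ γ q v) ⟨v, hDΓ q v⟩ κ
      simp only [kForm_eq] at this
      rw [hE]
      linarith
    · intro h q
      have hsym : ∀ (κ : Fin k) u v, fderiv ℝ γ q u κ v = fderiv ℝ γ q v κ u := by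
        intro κ u v
        have := h κ q u v
        rw [hE] at this
        linarith
      ext v
      constructor
      · intro hv
        refine ⟨v.1, ?_⟩
        rw [hDΓ q v.1]
        have h2 : v.2 = fderiv ℝ γ q v.1 := by
          funext κ
          ext u
          have := hv (u, fderiv ℝ γ q u) ⟨u, hDΓ q u⟩ κ
          simp only [kForm_eq] at this
          have h3 : fderiv ℝ γ q u κ v.1 = v.2 κ u := by linarith
          rw [hsym κ v.1 u, ← h3, hsym κ u v.1]
        rw [← h2]
      · rintro ⟨u, rfl⟩ w ⟨u', rfl⟩ κ
        show kForm κ _ _ _ = 0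
        rw [kForm_eq, hDΓ q u, hDΓ q u']
        simp [hsym κ u' u]
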